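/- Let φ(x) = e^{−x²/2}/√(2π) denote the standard normal density and Φ(z) = ∫_{−∞}^z φ(x) dx the standard normal cumulative distribution function. Then for every β ∈ ℝ, −2β·φ(−β) − 2β²·(1 − Φ(−β)) ≤ 0.2025. -/

import Mathlib

noncomputable section
namespace S12

open Real MeasureTheory Set Filter Topology intervalIntegral

/-- standard normal density -/
def p (x : ℝ) : ℝ := Real.exp (-x ^ 2 / 2) / Real.sqrt (2 * Real.pi)

lemma sqrt2pi_pos : 0 < Real.sqrt (2 * Real.pi) :=
  Real.sqrt_pos.mpr (by positivity)

lemma sqrt2pi_lb : (2.506628 : ℝ) ≤ Real.sqrt (2 * Real.pi) := by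
  rw [show (2.506628 : ℝ) = Real.sqrt (2.506628 ^ 2) from
    (Real.sqrt_sq (by norm_num)).symm]
  exact Real.sqrt_le_sqrt (by nlinarith [Real.pi_gt_d6])

lemma sqrt2pi_ub : Real.sqrt (2 * Real.pi) ≤ 2.506629 := by
  rw [show (2.506629 : ℝ) = Real.sqrt (2.506629 ^ 2) from
    (Real.sqrt_sq (by norm_num)).symm]
  exact Real.sqrt_le_sqrt (by nlinarith [Real.pi_lt_d6])

lemma p_pos (x : ℝ) : 0 < p x := div_pos (Real.exp_pos _) sqrt2pi_pos

lemma p_cont : Continuous p := by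
  unfold p; fun_prop

lemma p_anti {a b : ℝ} (ha : 0 ≤ a) (hab : a ≤ b) : p b ≤ p a := by
  unfold p
  apply (div_le_div_iff_of_pos_right sqrt2pi_pos).mpr
  exact Real.exp_le_exp.mpr (by nlinarith)

lemma p_integrable : Integrable p := by
  have h := (integrable_exp_neg_mul_sq (by norm_num : (0:ℝ) < 1/2)).div_const
    (Real.sqrt (2 * Real.pi))
  refine h.congr (Eventually.of_forall fun x => ?_)
  rw [p, show -(x:ℝ) ^ 2 / 2 = -(1/2) * x ^ 2 by ring]

lemma p_integral : ∫ x, p x = 1 := by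
  have h1 : ∫ x : ℝ, Real.exp (-(1/2) * x ^ 2) = Real.sqrt (Real.pi / (1/2)) :=
    integral_gaussian (1/2)
  have hp : p = fun x : ℝ => Real.exp (-(1/2) * x ^ 2) / Real.sqrt (2 * Real.pi) := by
    funext x
    rw [p, show -(x:ℝ) ^ 2 / 2 = -(1/2) * x ^ 2 by ring]
  rw [hp, MeasureTheory.integral_div, h1, show Real.pi / (1/2) = 2 * Real.pi by ring]
  exact div_self sqrt2pi_pos.ne'

/-- standard normal cdf -/
def Phi (z : ℝ) : ℝ := ∫ x in Iic z, p x

lemma Phi_le_one (z : ℝ) : Phi z ≤ 1 := by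
  rw [← p_integral]
  exact setIntegral_le_integral p_integrable (Eventually.of_forall fun x => (p_pos x).le)

lemma Phi_nonneg (z : ℝ) : 0 ≤ Phi z :=
  setIntegral_nonneg measurableSet_Iic fun x _ => (p_pos x).le

lemma Phi_mono : Monotone Phi := by
  intro a b hab
  exact setIntegral_mono_set p_integrable.integrableOn
    (Eventually.of_forall fun x => (p_pos x).le)
    (HasSubset.Subset.eventuallyLE (Iic_subset_Iic.mpr hab))

lemma Phi_sub (a b : ℝ) : Phi b - Phi a = ∫ x in a..b, p x :=
  integral_Iic_sub_Iic p_integrable.integrableOn p_integrable.integrableOn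

lemma Phi_zero : Phi 0 = 1/2 := by
  have hIoi : ∫ x in Ioi (0:ℝ), p x = 1/2 := by
    have h1 : ∫ x in Ioi (0:ℝ), Real.exp (-(1/2) * x ^ 2)
        = Real.sqrt (Real.pi / (1/2)) / 2 := integral_gaussian_Ioi (1/2)
    have hp : p = fun x : ℝ => Real.exp (-(1/2) * x ^ 2) / Real.sqrt (2 * Real.pi) := by
      funext x
      rw [p, show -(x:ℝ) ^ 2 / 2 = -(1/2) * x ^ 2 by ring]
    rw [hp, MeasureTheory.integral_div, h1, show Real.pi / (1/2) = 2 * Real.pi by ring]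
    rw [div_div, div_eq_div_iff (by positivity) (by norm_num : (2:ℝ) ≠ 0)]
    ring
  have h := integral_Iic_add_Ioi (b := (0:ℝ))
    p_integrable.integrableOn p_integrable.integrableOn
  rw [p_integral, hIoi] at h
  have : Phi 0 = ∫ x in Iic (0:ℝ), p x := rfl
  linarith [this ▸ h]

lemma hasDerivAt_Phi (z : ℝ) : HasDerivAt Phi (p z) z := by
  have h : HasDerivAt (fun u => Phi 0 + ∫ x in (0:ℝ)..u, p x) (p z) z :=
    ((p_cont.integral_hasStrictDerivAt 0 z).hasDerivAt).const_add _
  refine h.congr_of_eventuallyEq (Eventually.of_forall fun u => ?_)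
  show Phi u = Phi 0 + ∫ x in (0:ℝ)..u, p x
  rw [← Phi_sub 0 u]; ring

lemma Phi_cont : Continuous Phi :=
  continuous_iff_continuousAt.mpr fun z => (hasDerivAt_Phi z).continuousAt

lemma hasDerivAt_p (x : ℝ) : HasDerivAt p (-x * p x) x := by
  have h1 : HasDerivAt (fun y : ℝ => -y ^ 2 / 2) (-x) x := by
    have := ((hasDerivAt_pow 2 x).neg).div_const 2
    refine this.congr_deriv ?_
    simp; ring
  have h2 := (h1.exp).div_const (Real.sqrt (2 * Real.pi))
  refine h2.congr_deriv ?_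
  unfold p; field_simp

/-- the score function -/
def g (t : ℝ) : ℝ := 2 * t * p t - 2 * t ^ 2 * (1 - Phi t)

lemma hasDerivAt_g (t : ℝ) : HasDerivAt g (2 * p t - 4 * t * (1 - Phi t)) t := by
  have A : HasDerivAt (fun t : ℝ => 2 * t) 2 t := by
    simpa using (hasDerivAt_id t).const_mul 2
  have B := A.mul (hasDerivAt_p t)
  have C : HasDerivAt (fun t : ℝ => 2 * t ^ 2) (4 * t) t := by
    have := (hasDerivAt_pow 2 t).const_mul 2
    refine this.congr_deriv ?_
    simp; ring
  have D : HasDerivAt (fun t => 1 - Phi t) (-p t) t := (hasDerivAt_Phi t).const_sub 1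
  have E := C.mul D
  have F := B.sub E
  refine F.congr_deriv ?_
  ring

/-- auxiliary function h(t) = p t / (2t) - (1 - Phi t) -/
def hh (t : ℝ) : ℝ := p t / (2 * t) - (1 - Phi t)

lemma hasDerivAt_hh {t : ℝ} (ht : t ≠ 0) :
    HasDerivAt hh (p t * (t ^ 2 - 1) / (2 * t ^ 2)) t := by
  have A : HasDerivAt (fun t : ℝ => 2 * t) 2 t := by
    simpa using (hasDerivAt_id t).const_mul 2
  have B := (hasDerivAt_p t).div A (by simpa using ht)
  have D : HasDerivAt (fun t => 1 - Phi t) (-p t) t := (hasDerivAt_Phi t).const_sub 1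
  have F := B.sub D
  refine F.congr_deriv ?_
  field_simp
  ring

lemma hh_deriv_eq {t : ℝ} (ht : t ≠ 0) :
    deriv hh t = p t * (t ^ 2 - 1) / (2 * t ^ 2) := (hasDerivAt_hh ht).deriv

lemma hh_anti : AntitoneOn hh (Icc (0.35 : ℝ) 1) := by
  apply antitoneOn_of_deriv_nonpos (convex_Icc _ _)
  · apply ContinuousOn.sub
    · apply ContinuousOn.div p_cont.continuousOn (by fun_prop)
      intro x hx
      have : (0.35 : ℝ) ≤ x := hx.1
      positivity
    · exact (continuous_const.sub Phi_cont).continuousOn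
  · intro x hx
    rw [interior_Icc] at hx
    exact (hasDerivAt_hh (by norm_num; nlinarith [hx.1] : x ≠ 0)).differentiableAt.differentiableWithinAt
  · intro x hx
    rw [interior_Icc] at hx
    have hx0 : (0:ℝ) < x := lt_trans (by norm_num) hx.1
    rw [hh_deriv_eq hx0.ne']
    apply div_nonpos_of_nonpos_of_nonneg
    · have hfac : x ^ 2 - 1 ≤ 0 := by nlinarith [hx.1, hx.2]
      nlinarith [p_pos x, hfac]
    · positivity

lemma tendsto_Phi : Tendsto Phi atTop (𝓝 1) := by
  have h := tendsto_setIntegral_of_monotone (μ := (volume : Measure ℝ))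
    (s := fun t : ℝ => Iic t) (f := p)
    (fun i => measurableSet_Iic)
    (fun a b hab => Iic_subset_Iic.mpr hab)
    (by rw [iUnion_Iic]; exact p_integrable.integrableOn)
  have heq : ∫ x in ⋃ n : ℝ, Iic n, p x = 1 := by
    rw [iUnion_Iic, MeasureTheory.setIntegral_univ, p_integral]
  rw [heq] at h
  exact h

lemma tendsto_tail : Tendsto (fun t : ℝ => p t / (2 * t)) atTop (𝓝 0) := by
  have hb : Tendsto (fun t : ℝ => Real.exp (-(t / 2))) atTop (𝓝 0) :=
    Real.tendsto_exp_neg_atTop_nhds_zero.comp (tendsto_id.atTop_div_const (by norm_num))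
  apply squeeze_zero' (g := fun t : ℝ => Real.exp (-(t / 2)))
  · filter_upwards [eventually_ge_atTop (1:ℝ)] with t ht
    exact div_nonneg (p_pos t).le (by linarith)
  · filter_upwards [eventually_ge_atTop (1:ℝ)] with t ht
    have h1 : p t / (2 * t) ≤ p t := by
      apply div_le_self (p_pos t).le; linarith
    have h2 : p t ≤ Real.exp (-t ^ 2 / 2) := by
      unfold p
      apply div_le_self (Real.exp_pos _).le
      linarith [sqrt2pi_lb]
    have h3 : Real.exp (-t ^ 2 / 2) ≤ Real.exp (-(t / 2)) := by
      apply Real.exp_le_exp.mpr; nlinarith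
    linarith
  · exact hb

lemma hh_nonpos_of_one_le {t : ℝ} (ht : 1 ≤ t) : hh t ≤ 0 := by
  set u : ℝ → ℝ := fun t => -hh t with hu
  have hderiv : ∀ x ∈ Ioi (1:ℝ), deriv u x ≤ 0 := by
    intro x hx
    have hx1 : (1:ℝ) < x := hx
    have : HasDerivAt u (-(p x * (x ^ 2 - 1) / (2 * x ^ 2))) x :=
      (hasDerivAt_hh (by positivity : x ≠ 0)).neg
    rw [this.deriv]
    have : 0 ≤ p x * (x ^ 2 - 1) / (2 * x ^ 2) := by
      apply div_nonneg _ (by positivity)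
      have hfac : 0 ≤ x ^ 2 - 1 := by nlinarith
      nlinarith [p_pos x, hfac]
    linarith
  have hanti : AntitoneOn u (Ici (1:ℝ)) := by
    apply antitoneOn_of_deriv_nonpos (convex_Ici _)
    · apply ContinuousOn.neg
      apply ContinuousOn.sub
      · apply ContinuousOn.div p_cont.continuousOn (by fun_prop)
        intro x hx
        have : (1 : ℝ) ≤ x := hx
        positivity
      · exact (continuous_const.sub Phi_cont).continuousOn
    · intro x hx
      rw [interior_Ici] at hx
      have hx1 : (1:ℝ) < x := hx
      exact ((hasDerivAt_hh (by positivity : x ≠ 0)).neg).differentiableAt.differentiableWithinAt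
    · rw [interior_Ici]; exact hderiv
  have hlim : Tendsto u atTop (𝓝 0) := by
    have : Tendsto (fun t : ℝ => (1 - Phi t) - p t / (2 * t)) atTop (𝓝 ((1 - 1) - 0)) :=
      (tendsto_const_nhds.sub tendsto_Phi).sub tendsto_tail
    simp only [sub_self, sub_zero] at this
    refine this.congr fun t => ?_
    simp only [hu, hh]; ring
  have h0 : 0 ≤ u t := by
    apply le_of_tendsto hlim
    filter_upwards [eventually_ge_atTop t] with s hs
    exact hanti (mem_Ici.mpr ht) (mem_Ici.mpr (le_trans ht hs)) hs
  simpa [hu] using h0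

/-! ### Numeric bounds -/

lemma exp_neg_bounds {y : ℝ} (h0 : 0 ≤ y) (h1 : y ≤ 1) :
    1 - y + y ^ 2 / 2 - y ^ 3 / 6 + y ^ 4 / 24 - y ^ 5 / 100 ≤ Real.exp (-y) ∧
    Real.exp (-y) ≤ 1 - y + y ^ 2 / 2 - y ^ 3 / 6 + y ^ 4 / 24 + y ^ 5 / 100 := by
  have habs : |(-y : ℝ)| ≤ 1 := by rwa [abs_neg, abs_of_nonneg h0]
  have h := Real.exp_bound habs (n := 5) (by norm_num)
  rw [abs_neg, abs_of_nonneg h0] at h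
  have hs : ∑ m ∈ Finset.range 5, (-y) ^ m / (m.factorial : ℝ)
      = 1 - y + y ^ 2 / 2 - y ^ 3 / 6 + y ^ 4 / 24 := by
    simp [Finset.sum_range_succ, Nat.factorial]
    ring
  rw [hs] at h
  have h5 : ((5+1 : ℕ) : ℝ) / ((Nat.factorial 5 : ℝ) * 5) = 1 / 100 := by
    norm_num [Nat.factorial]
  have h' := abs_le.mp h
  constructor <;> nlinarith [h'.1, h'.2, pow_nonneg h0 5]

/-- Bounds for `J x = ∫ s in 0..x, exp (-s^2/2)`. -/
lemma J_bounds {x : ℝ} (h0 : 0 ≤ x) (h1 : x ≤ 1) :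
    x - x ^ 3 / 6 + x ^ 5 / 40 - x ^ 7 / 336 + x ^ 9 / 3456 - x ^ 11 / 35200
      ≤ ∫ s in (0:ℝ)..x, Real.exp (-s ^ 2 / 2) ∧
    (∫ s in (0:ℝ)..x, Real.exp (-s ^ 2 / 2))
      ≤ x - x ^ 3 / 6 + x ^ 5 / 40 - x ^ 7 / 336 + x ^ 9 / 3456 + x ^ 11 / 35200 := by
  have hint : IntervalIntegrable (fun s : ℝ => Real.exp (-s ^ 2 / 2)) volume 0 x := by
    apply Continuous.intervalIntegrable; fun_prop
  have key : ∀ s : ℝ, s ∈ Icc 0 x →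
      (1 - s ^ 2 / 2 + s ^ 4 / 8 - s ^ 6 / 48 + s ^ 8 / 384 - s ^ 10 / 3200
        ≤ Real.exp (-s ^ 2 / 2) ∧
      Real.exp (-s ^ 2 / 2)
        ≤ 1 - s ^ 2 / 2 + s ^ 4 / 8 - s ^ 6 / 48 + s ^ 8 / 384 + s ^ 10 / 3200) := by
    intro s hs
    have hy0 : (0:ℝ) ≤ s ^ 2 / 2 := by positivity
    have hy1 : s ^ 2 / 2 ≤ 1 := by nlinarith [hs.1, hs.2]
    have h := exp_neg_bounds hy0 hy1
    have harg : -(s ^ 2 / 2) = -s ^ 2 / 2 := by ring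
    rw [harg] at h
    constructor
    · refine le_trans (le_of_eq ?_) h.1; ring
    · refine le_trans h.2 (le_of_eq ?_); ring
  constructor
  · -- lower bound
    have heval : ∫ s in (0:ℝ)..x,
        (1 - s ^ 2 / 2 + s ^ 4 / 8 - s ^ 6 / 48 + s ^ 8 / 384 - s ^ 10 / 3200)
        = x - x ^ 3 / 6 + x ^ 5 / 40 - x ^ 7 / 336 + x ^ 9 / 3456 - x ^ 11 / 35200 := by
      have hderiv : ∀ s ∈ uIcc (0:ℝ) x, HasDerivAt (fun s : ℝ =>
          s - s ^ 3 / 6 + s ^ 5 / 40 - s ^ 7 / 336 + s ^ 9 / 3456 - s ^ 11 / 35200)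
          (1 - s ^ 2 / 2 + s ^ 4 / 8 - s ^ 6 / 48 + s ^ 8 / 384 - s ^ 10 / 3200) s := by
        intro s _
        have h1 := hasDerivAt_id s
        have h3 := (hasDerivAt_pow 3 s).div_const 6
        have h5 := (hasDerivAt_pow 5 s).div_const 40
        have h7 := (hasDerivAt_pow 7 s).div_const 336
        have h9 := (hasDerivAt_pow 9 s).div_const 3456
        have h11 := (hasDerivAt_pow 11 s).div_const 35200
        have := ((((h1.sub h3).add h5).sub h7).add h9).sub h11
        refine this.congr_deriv ?_
        push_cast
        ring
      rw [integral_eq_sub_of_hasDerivAt hderiv (by apply Continuous.intervalIntegrable; fun_prop)]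
      norm_num
    rw [← heval]
    apply integral_mono_on h0 (by apply Continuous.intervalIntegrable; fun_prop) hint
    intro s hs
    exact (key s hs).1
  · -- upper bound
    have heval : ∫ s in (0:ℝ)..x,
        (1 - s ^ 2 / 2 + s ^ 4 / 8 - s ^ 6 / 48 + s ^ 8 / 384 + s ^ 10 / 3200)
        = x - x ^ 3 / 6 + x ^ 5 / 40 - x ^ 7 / 336 + x ^ 9 / 3456 + x ^ 11 / 35200 := by
      have hderiv : ∀ s ∈ uIcc (0:ℝ) x, HasDerivAt (fun s : ℝ =>
          s - s ^ 3 / 6 + s ^ 5 / 40 - s ^ 7 / 336 + s ^ 9 / 3456 + s ^ 11 / 35200)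
          (1 - s ^ 2 / 2 + s ^ 4 / 8 - s ^ 6 / 48 + s ^ 8 / 384 + s ^ 10 / 3200) s := by
        intro s _
        have h1 := hasDerivAt_id s
        have h3 := (hasDerivAt_pow 3 s).div_const 6
        have h5 := (hasDerivAt_pow 5 s).div_const 40
        have h7 := (hasDerivAt_pow 7 s).div_const 336
        have h9 := (hasDerivAt_pow 9 s).div_const 3456
        have h11 := (hasDerivAt_pow 11 s).div_const 35200
        have := ((((h1.sub h3).add h5).sub h7).add h9).add h11
        refine this.congr_deriv ?_
        push_cast
        ring
      rw [integral_eq_sub_of_hasDerivAt hderiv (by apply Continuous.intervalIntegrable; fun_prop)]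
      norm_num
    rw [← heval]
    apply integral_mono_on h0 hint (by apply Continuous.intervalIntegrable; fun_prop)
    intro s hs
    exact (key s hs).2

/-- inverse of sqrt(2π) bounds -/
lemma inv_sqrt2pi_bounds :
    (1 / 2.506629 : ℝ) ≤ 1 / Real.sqrt (2 * Real.pi) ∧
    (1 / Real.sqrt (2 * Real.pi) : ℝ) ≤ 1 / 2.506628 := by
  constructor
  · exact one_div_le_one_div_of_le sqrt2pi_pos sqrt2pi_ub
  · exact one_div_le_one_div_of_le (by norm_num) sqrt2pi_lb

lemma Phi_eval (x : ℝ) :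
    Phi x = 1 / 2 + (∫ s in (0:ℝ)..x, Real.exp (-s ^ 2 / 2)) * (1 / Real.sqrt (2 * Real.pi)) := by
  have h := Phi_sub 0 x
  rw [Phi_zero] at h
  have h2 : ∫ s in (0:ℝ)..x, p s
      = (∫ s in (0:ℝ)..x, Real.exp (-s ^ 2 / 2)) * (1 / Real.sqrt (2 * Real.pi)) := by
    rw [← intervalIntegral.integral_mul_const]
    congr 1 with s
    rw [p, div_eq_mul_one_div]
  rw [h2] at h
  linarith

lemma p_eval (x : ℝ) : p x = Real.exp (-x ^ 2 / 2) * (1 / Real.sqrt (2 * Real.pi)) := by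
  rw [p, div_eq_mul_one_div]

/-- Numeric (a): `hh 0.61 > 0`. -/
lemma hh_061_pos : 0 < hh 0.61 := by
  have hE := exp_neg_bounds (y := 0.18605) (by norm_num) (by norm_num)
  have hJ := J_bounds (x := 0.61) (by norm_num) (by norm_num)
  have hI := inv_sqrt2pi_bounds
  have harg : Real.exp (-(0.61:ℝ) ^ 2 / 2) = Real.exp (-(0.18605 : ℝ)) := by norm_num
  have hE1 : (0.830229 : ℝ) ≤ Real.exp (-(0.61:ℝ) ^ 2 / 2) := by
    rw [harg]
    have hc : (0.830229 : ℝ) ≤ 1 - 0.18605 + 0.18605 ^ 2 / 2 - 0.18605 ^ 3 / 6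
        + 0.18605 ^ 4 / 24 - 0.18605 ^ 5 / 100 := by norm_num
    linarith [hE.1]
  have hJ1 : (0.574190 : ℝ) ≤ ∫ s in (0:ℝ)..0.61, Real.exp (-s ^ 2 / 2) := by
    have hc : (0.574190 : ℝ) ≤ (0.61:ℝ) - 0.61 ^ 3 / 6 + 0.61 ^ 5 / 40 - 0.61 ^ 7 / 336
        + 0.61 ^ 9 / 3456 - 0.61 ^ 11 / 35200 := by norm_num
    linarith [hJ.1]
  have hi1 : (0.398941 : ℝ) ≤ 1 / Real.sqrt (2 * Real.pi) := by
    have hc : (0.398941 : ℝ) ≤ 1 / 2.506629 := by norm_num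
    linarith [hI.1]
  have hPhi : (1/2 + 0.574190 * 0.398941 : ℝ) ≤ Phi 0.61 := by
    rw [Phi_eval]
    have := mul_le_mul hJ1 hi1 (by norm_num) (by linarith)
    linarith
  have hp : (0.830229 * 0.398941 : ℝ) ≤ p 0.61 := by
    rw [p_eval]
    have := mul_le_mul hE1 hi1 (by norm_num) (by linarith)
    linarith
  have : hh 0.61 = p 0.61 / (2 * 0.61) - (1 - Phi 0.61) := rfl
  rw [this]
  have h1 : (0.830229 * 0.398941 : ℝ) / (2 * 0.61) ≤ p 0.61 / (2 * 0.61) := by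
    exact (div_le_div_iff_of_pos_right (by norm_num)).mpr hp
  linarith [h1, hPhi]

/-- Numeric (b): `hh 0.614 < 0`. -/
lemma hh_0614_neg : hh 0.614 < 0 := by
  have hE := exp_neg_bounds (y := 0.188498) (by norm_num) (by norm_num)
  have hJ := J_bounds (x := 0.614) (by norm_num) (by norm_num)
  have hI := inv_sqrt2pi_bounds
  have harg : Real.exp (-(0.614:ℝ) ^ 2 / 2) = Real.exp (-(0.188498 : ℝ)) := by norm_num
  have hE2 : Real.exp (-(0.614:ℝ) ^ 2 / 2) ≤ (0.828207 : ℝ) := by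
    rw [harg]
    have hc : 1 - 0.188498 + 0.188498 ^ 2 / 2 - 0.188498 ^ 3 / 6
        + 0.188498 ^ 4 / 24 + 0.188498 ^ 5 / 100 ≤ (0.828207 : ℝ) := by norm_num
    linarith [hE.2]
  have hJ2 : (∫ s in (0:ℝ)..0.614, Real.exp (-s ^ 2 / 2)) ≤ (0.577509 : ℝ) := by
    have hc : (0.614:ℝ) - 0.614 ^ 3 / 6 + 0.614 ^ 5 / 40 - 0.614 ^ 7 / 336
        + 0.614 ^ 9 / 3456 + 0.614 ^ 11 / 35200 ≤ (0.577509 : ℝ) := by norm_num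
    linarith [hJ.2]
  have hi2 : (1 / Real.sqrt (2 * Real.pi) : ℝ) ≤ 0.398943 := by
    have hc : (1 / 2.506628 : ℝ) ≤ 0.398943 := by norm_num
    linarith [hI.2]
  have hipos : (0 : ℝ) < 1 / Real.sqrt (2 * Real.pi) := by positivity
  have hJpos : (0:ℝ) ≤ ∫ s in (0:ℝ)..0.614, Real.exp (-s ^ 2 / 2) := by
    have hc : (0:ℝ) ≤ (0.614:ℝ) - 0.614 ^ 3 / 6 + 0.614 ^ 5 / 40 - 0.614 ^ 7 / 336
        + 0.614 ^ 9 / 3456 - 0.614 ^ 11 / 35200 := by norm_num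
    linarith [hJ.1]
  have hPhi : Phi 0.614 ≤ (1/2 + 0.577509 * 0.398943 : ℝ) := by
    rw [Phi_eval]
    have := mul_le_mul hJ2 hi2 hipos.le (by norm_num)
    linarith
  have hp : p 0.614 ≤ (0.828207 * 0.398943 : ℝ) := by
    rw [p_eval]
    have := mul_le_mul hE2 hi2 hipos.le (by norm_num)
    linarith
  have : hh 0.614 = p 0.614 / (2 * 0.614) - (1 - Phi 0.614) := rfl
  rw [this]
  have h1 : p 0.614 / (2 * 0.614) ≤ (0.828207 * 0.398943 : ℝ) / (2 * 0.614) := by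
    exact (div_le_div_iff_of_pos_right (by norm_num)).mpr hp
  linarith [h1, hPhi]

/-- Numeric (c): final bound. -/
lemma final_numeric :
    g 0.61 + 0.004 * (2 * p 0.61 - 2.44 * (1 - Phi 0.614)) ≤ 0.2025 := by
  have hE := exp_neg_bounds (y := 0.18605) (by norm_num) (by norm_num)
  have hJ1 := J_bounds (x := 0.61) (by norm_num) (by norm_num)
  have hJ2 := J_bounds (x := 0.614) (by norm_num) (by norm_num)
  have hI := inv_sqrt2pi_bounds
  have hipos : (0 : ℝ) < 1 / Real.sqrt (2 * Real.pi) := by positivity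
  have hi2 : (1 / Real.sqrt (2 * Real.pi) : ℝ) ≤ 0.398943 := by
    have hc : (1 / 2.506628 : ℝ) ≤ 0.398943 := by norm_num
    linarith [hI.2]
  have harg : Real.exp (-(0.61:ℝ) ^ 2 / 2) = Real.exp (-(0.18605 : ℝ)) := by norm_num
  have hE2 : Real.exp (-(0.61:ℝ) ^ 2 / 2) ≤ (0.830237 : ℝ) := by
    rw [harg]
    have hc : 1 - 0.18605 + 0.18605 ^ 2 / 2 - 0.18605 ^ 3 / 6
        + 0.18605 ^ 4 / 24 + 0.18605 ^ 5 / 100 ≤ (0.830237 : ℝ) := by norm_num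
    linarith [hE.2]
  have hJ1u : (∫ s in (0:ℝ)..0.61, Real.exp (-s ^ 2 / 2)) ≤ (0.574192 : ℝ) := by
    have hc : (0.61:ℝ) - 0.61 ^ 3 / 6 + 0.61 ^ 5 / 40 - 0.61 ^ 7 / 336
        + 0.61 ^ 9 / 3456 + 0.61 ^ 11 / 35200 ≤ (0.574192 : ℝ) := by norm_num
    linarith [hJ1.2]
  have hJ2u : (∫ s in (0:ℝ)..0.614, Real.exp (-s ^ 2 / 2)) ≤ (0.577509 : ℝ) := by
    have hc : (0.614:ℝ) - 0.614 ^ 3 / 6 + 0.614 ^ 5 / 40 - 0.614 ^ 7 / 336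
        + 0.614 ^ 9 / 3456 + 0.614 ^ 11 / 35200 ≤ (0.577509 : ℝ) := by norm_num
    linarith [hJ2.2]
  have hJ1l : (0:ℝ) ≤ ∫ s in (0:ℝ)..0.61, Real.exp (-s ^ 2 / 2) := by
    have hc : (0:ℝ) ≤ (0.61:ℝ) - 0.61 ^ 3 / 6 + 0.61 ^ 5 / 40 - 0.61 ^ 7 / 336
        + 0.61 ^ 9 / 3456 - 0.61 ^ 11 / 35200 := by norm_num
    linarith [hJ1.1]
  have hJ2l : (0:ℝ) ≤ ∫ s in (0:ℝ)..0.614, Real.exp (-s ^ 2 / 2) := by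
    have hc : (0:ℝ) ≤ (0.614:ℝ) - 0.614 ^ 3 / 6 + 0.614 ^ 5 / 40 - 0.614 ^ 7 / 336
        + 0.614 ^ 9 / 3456 - 0.614 ^ 11 / 35200 := by norm_num
    linarith [hJ2.1]
  have hp : p 0.61 ≤ (0.830237 * 0.398943 : ℝ) := by
    rw [p_eval]
    have := mul_le_mul hE2 hi2 hipos.le (by norm_num)
    linarith
  have hPhi1 : Phi 0.61 ≤ (1/2 + 0.574192 * 0.398943 : ℝ) := by
    rw [Phi_eval]
    have := mul_le_mul hJ1u hi2 hipos.le (by norm_num)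
    linarith
  have hPhi2 : Phi 0.614 ≤ (1/2 + 0.577509 * 0.398943 : ℝ) := by
    rw [Phi_eval]
    have := mul_le_mul hJ2u hi2 hipos.le (by norm_num)
    linarith
  have hPhi1' : Phi 0.61 ≤ 1 := Phi_le_one _
  have hPhi2' : Phi 0.614 ≤ 1 := Phi_le_one _
  have hg : g 0.61 = 2 * 0.61 * p 0.61 - 2 * (0.61:ℝ) ^ 2 * (1 - Phi 0.61) := rfl
  rw [hg]
  linarith [hp, hPhi1, hPhi2, hPhi1', hPhi2', p_pos (0.61 : ℝ)]

/-- p(0.35) > 0.35 -/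
lemma p_035 : (0.35 : ℝ) < p 0.35 := by
  rw [p_eval]
  have hI := inv_sqrt2pi_bounds
  have hi1 : (0.398941 : ℝ) ≤ 1 / Real.sqrt (2 * Real.pi) := by nlinarith [hI.1]
  have hE : (0.93875 : ℝ) ≤ Real.exp (-(0.35:ℝ) ^ 2 / 2) := by
    have := Real.add_one_le_exp (-(0.35:ℝ) ^ 2 / 2)
    nlinarith
  nlinarith [mul_le_mul hE hi1 (by norm_num) (by linarith [Real.exp_pos (-(0.35:ℝ) ^ 2 / 2)])]

/-! ### Monotonicity regions -/

lemma g_deriv_eq (t : ℝ) : deriv g t = 2 * p t - 4 * t * (1 - Phi t) :=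
  (hasDerivAt_g t).deriv

lemma g_cont : Continuous g := by
  apply Continuous.sub
  · exact (continuous_const.mul continuous_id).mul p_cont
  · exact (continuous_const.mul (continuous_pow 2)).mul (continuous_const.sub Phi_cont)

/-- Region A: g monotone on [0, 0.61] -/
lemma g_mono_A : MonotoneOn g (Icc (0:ℝ) 0.61) := by
  apply monotoneOn_of_deriv_nonneg (convex_Icc _ _) g_cont.continuousOn
  · intro x _
    exact (hasDerivAt_g x).differentiableAt.differentiableWithinAt
  · intro x hx
    rw [interior_Icc] at hx
    rw [g_deriv_eq]
    rcases le_or_gt x 0.35 with hc | hc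
    · -- small t: 2 p x - 4 x (1 - Phi x) ≥ 2 p x - 2 x ≥ 0
      have h1 : 1 - Phi x ≤ 1/2 := by
        have := Phi_mono (le_of_lt hx.1)
        rw [Phi_zero] at this
        linarith
      have h2 : p 0.35 ≤ p x := p_anti hx.1.le hc
      have h3 : 0 ≤ 1 - Phi x := by linarith [Phi_le_one x]
      nlinarith [p_035, hx.1]
    · -- medium t: 4 x hh x ≥ 4 x hh 0.61 > 0
      have hhx : hh 0.61 ≤ hh x :=
        hh_anti (mem_Icc.mpr ⟨hc.le, by linarith [hx.2]⟩)
          (mem_Icc.mpr ⟨by norm_num, by norm_num⟩) (le_of_lt hx.2)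
      have hpos : 0 < hh x := lt_of_lt_of_le hh_061_pos hhx
      have hx0 : (0:ℝ) < x := hx.1
      have key : 2 * p x - 4 * x * (1 - Phi x) = 4 * x * hh x := by
        unfold hh
        field_simp
        ring
      rw [key]
      positivity

/-- Region C: g antitone on [0.614, ∞) -/
lemma g_anti_C : AntitoneOn g (Ici (0.614:ℝ)) := by
  apply antitoneOn_of_deriv_nonpos (convex_Ici _) g_cont.continuousOn
  · intro x _
    exact (hasDerivAt_g x).differentiableAt.differentiableWithinAt
  · intro x hx
    rw [interior_Ici] at hx
    have hx1 : (0.614:ℝ) < x := hx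
    have hx0 : (0:ℝ) < x := by linarith
    rw [g_deriv_eq]
    have key : 2 * p x - 4 * x * (1 - Phi x) = 4 * x * hh x := by
      unfold hh; field_simp; ring
    rw [key]
    have hhx : hh x ≤ 0 := by
      rcases le_or_gt x 1 with hc | hc
      · have := hh_anti (mem_Icc.mpr ⟨by norm_num, by linarith⟩)
          (mem_Icc.mpr ⟨by linarith, hc⟩) hx1.le
        linarith [hh_0614_neg]
      · exact hh_nonpos_of_one_le hc.le
    nlinarith

/-- Region B: linear bound on [0.61, 0.614] -/
lemma g_B {t : ℝ} (ht : t ∈ Icc (0.61:ℝ) 0.614) :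
    g t ≤ g 0.61 + (t - 0.61) * (2 * p 0.61 - 2.44 * (1 - Phi 0.614)) := by
  set G : ℝ := 2 * p 0.61 - 2.44 * (1 - Phi 0.614) with hG
  set F : ℝ → ℝ := fun t => g 0.61 + (t - 0.61) * G - g t with hF
  have hmono : MonotoneOn F (Icc (0.61:ℝ) 0.614) := by
    apply monotoneOn_of_deriv_nonneg (convex_Icc _ _)
    · apply ContinuousOn.sub
      · fun_prop
      · exact g_cont.continuousOn
    · intro x _
      apply DifferentiableAt.differentiableWithinAt
      apply DifferentiableAt.sub
      · fun_prop
      · exact (hasDerivAt_g x).differentiableAt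
    · intro x hx
      rw [interior_Icc] at hx
      have hd : HasDerivAt F (G - (2 * p x - 4 * x * (1 - Phi x))) x := by
        have h1 : HasDerivAt (fun t : ℝ => g 0.61 + (t - 0.61) * G) G x := by
          have := ((hasDerivAt_id x).sub_const 0.61).mul_const G
          simpa using this.const_add (g 0.61)
        exact h1.sub (hasDerivAt_g x)
      rw [hd.deriv]
      have hp1 : p x ≤ p 0.61 := p_anti (by norm_num) hx.1.le
      have hPhi1 : Phi x ≤ Phi 0.614 := Phi_mono hx.2.le
      have hx0 : (0.61:ℝ) < x := hx.1
      have hq : 0 ≤ 1 - Phi x := by linarith [Phi_le_one x]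
      rw [hG]
      nlinarith
  have h0 : F 0.61 = 0 := by simp [hF]
  have := hmono (mem_Icc.mpr ⟨le_refl _, by norm_num⟩) ht ht.1
  rw [h0] at this
  simp only [hF] at this
  linarith

/-- Main bound for the concrete g -/
lemma g_le (t : ℝ) (ht : 0 ≤ t) : g t ≤ 0.2025 := by
  have hB061 : g 0.61 ≤ g 0.61 := le_refl _
  have key : ∀ s ∈ Icc (0.61:ℝ) 0.614, g s ≤ 0.2025 := by
    intro s hs
    calc g s ≤ g 0.61 + (s - 0.61) * (2 * p 0.61 - 2.44 * (1 - Phi 0.614)) := g_B hs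
    _ ≤ g 0.61 + 0.004 * (2 * p 0.61 - 2.44 * (1 - Phi 0.614)) := by
        have hG : 0 ≤ 2 * p 0.61 - 2.44 * (1 - Phi 0.614) := by
          -- G ≥ g'(0.614)/... show directly: 2 p 0.61 ≥ 2 p 0.614 ≥ 4*0.614*(hh term)...
          -- simpler: from hh_061_pos-type bound: use p ≥, Phi ≤ relations
          have h1 : p 0.614 ≤ p 0.61 := p_anti (by norm_num) (by norm_num)
          have h2 : 0 < hh 0.61 := hh_061_pos
          have h3 : Phi 0.61 ≤ Phi 0.614 := Phi_mono (by norm_num)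
          -- hh 0.61 > 0 means p 0.61 / 1.22 > 1 - Phi 0.61 ≥ 1 - Phi 0.614
          have h4 : p 0.61 / (2 * 0.61) - (1 - Phi 0.61) = hh 0.61 := rfl
          have h5 : p 0.61 / (2 * 0.61) = p 0.61 * (1 / 1.22) := by
            rw [div_eq_mul_one_div]; norm_num
          linarith [p_pos (0.61:ℝ)]
        have : s - 0.61 ≤ 0.004 := by linarith [hs.2]
        nlinarith [hs.1]
    _ ≤ 0.2025 := final_numeric
  rcases le_or_gt t 0.61 with h1 | h1
  · have := g_mono_A (mem_Icc.mpr ⟨ht, h1⟩) (mem_Icc.mpr ⟨by norm_num, le_refl _⟩) h1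
    have h061 : g 0.61 ≤ 0.2025 := key 0.61 (mem_Icc.mpr ⟨le_refl _, by norm_num⟩)
    linarith
  rcases le_or_gt t 0.614 with h2 | h2
  · exact key t (mem_Icc.mpr ⟨h1.le, h2⟩)
  · have := g_anti_C (mem_Ici.mpr (le_refl (0.614:ℝ))) (mem_Ici.mpr h2.le) h2.le
    have h0614 : g 0.614 ≤ 0.2025 := key 0.614 (mem_Icc.mpr ⟨by norm_num, le_refl _⟩)
    linarith

end S12

end

/-- Lemma 2 (expectation bound): with `φ` the standard normal density and
`Φ` the standard normal cdf, for every `β ∈ ℝ`,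
`−2β·φ(−β) − 2β²·(1 − Φ(−β)) ≤ 0.2025`. -/
theorem stmt_12 (φ Φ : ℝ → ℝ)
    (hφ : ∀ x, φ x = Real.exp (-x ^ 2 / 2) / Real.sqrt (2 * Real.pi))
    (hΦ : ∀ z, Φ z = ∫ x in Set.Iic z, φ x) :
    ∀ β : ℝ, -2 * β * φ (-β) - 2 * β ^ 2 * (1 - Φ (-β)) ≤ 0.2025 := by
  intro β
  have hφp : ∀ x, φ x = S12.p x := fun x => hφ x
  have hΦP : ∀ z, Φ z = S12.Phi z := by
    intro z
    rw [hΦ]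
    unfold S12.Phi
    congr 1 with x
    exact hφp x
  rw [hφp, hΦP]
  rcases le_or_gt 0 β with hb | hb
  · -- β ≥ 0 : both terms nonpositive
    have h1 : 0 ≤ S12.Phi (-β) := S12.Phi_nonneg _
    have h2 : S12.Phi (-β) ≤ 1 := S12.Phi_le_one _
    nlinarith [S12.p_pos (-β)]
  · -- β < 0 : use g
    have ht : 0 ≤ -β := by linarith
    have hg := S12.g_le (-β) ht
    have : -2 * β * S12.p (-β) - 2 * β ^ 2 * (1 - S12.Phi (-β)) = S12.g (-β) := by
      unfold S12.g
      ring
    rw [this]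
    exact hg
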